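/- For n ≥ 3, the number of random walk labelings of the wheel graph W_{n+1} on n+1 vertices is L(W_{n+1}) = n\left((n-1)! - 2^{n-2} + 2^{n-1}\sum_{k=0}^{n-1} \frac{k!}{2^{k}}\right). -/

import Mathlib

open Finset

/-- A sequence of `k` distinct vertices of `G` such that every vertex other than the
first is adjacent to some earlier vertex (a random walk labeling disrupted after the
`k`-th vertex). -/
def IsRWLPrefix {V : Type*} (G : SimpleGraph V) {k : ℕ} (v : Fin k → V) : Prop :=
  Function.Injective v ∧ ∀ i : Fin k, i.val ≠ 0 → ∃ j : Fin k, j < i ∧ G.Adj (v j) (v i)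

/-- `L_k(G)`: the number of random walk labelings of `G` disrupted after the `k`-th
vertex.  For `k = 0` this equals `1` (the empty sequence). -/
noncomputable def rwlPrefixCount {V : Type*} (G : SimpleGraph V) (k : ℕ) : ℕ :=
  Nat.card {v : Fin k → V // IsRWLPrefix G v}

/-- `L(G)`: the number of random walk labelings of `G`, i.e. orderings of all the
vertices of `G` in which every vertex other than the first is adjacent to some
earlier vertex. -/
noncomputable def rwlCount {V : Type*} (G : SimpleGraph V) [Fintype V] : ℕ :=
  rwlPrefixCount G (Fintype.card V)

/-- The cone over `G`: a new vertex (`none`) joined to every vertex of `G`. -/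
def SimpleGraph.cone {V : Type*} (G : SimpleGraph V) : SimpleGraph (Option V) :=
  SimpleGraph.fromRel (fun a b =>
    match a, b with
    | none, some _ => True
    | some x, some y => G.Adj x y
    | _, _ => False)

/-- The wheel graph `W_{n+1}`: the cone over the cycle graph `C_n`. -/
def wheelGraph (n : ℕ) : SimpleGraph (Option (Fin n)) :=
  (SimpleGraph.cycleGraph n).cone

lemma rwlPrefixCount_zero {V : Type*} (G : SimpleGraph V) : rwlPrefixCount G 0 = 1 := by
  have : Unique {v : Fin 0 → V // IsRWLPrefix G v} :=
    { default := ⟨fun i => i.elim0, fun i => i.elim0, fun i => i.elim0⟩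
      uniq := fun a => Subtype.ext (funext fun i => i.elim0) }
  simp [rwlPrefixCount, Nat.card_unique]

section Cone
variable {V : Type*} (G : SimpleGraph V)

lemma cone_adj_some_some {x y : V} : G.cone.Adj (some x) (some y) ↔ G.Adj x y := by
  simp only [SimpleGraph.cone, SimpleGraph.fromRel_adj]
  constructor
  · rintro ⟨-, h | h⟩
    · exact h
    · exact h.symm
  · intro h
    exact ⟨by simp [h.ne], Or.inl h⟩

lemma cone_adj_none_some (x : V) : G.cone.Adj none (some x) := by
  simp only [SimpleGraph.cone, SimpleGraph.fromRel_adj]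
  exact ⟨by simp, Or.inl trivial⟩

/-- gluing a prefix of `G`, the hub, and a tail -/
def glue (n m : ℕ) (p : Fin m → V) (q : Fin (n - m) → V) (i : Fin (n+1)) : Option V :=
  if h : i.val < m then some (p ⟨i.val, h⟩)
  else if h2 : i.val = m then none
  else some (q ⟨i.val - m - 1, by have := i.isLt; omega⟩)

variable {G}

lemma glue_isPrefix {n m : ℕ} {p : Fin m → V} {q : Fin (n - m) → V}
    (hp : IsRWLPrefix G p) (hq : Function.Injective q) (hpq : ∀ j i, q j ≠ p i) :
    IsRWLPrefix G.cone (glue n m p q) := by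
  constructor
  · intro i j h
    unfold glue at h
    split_ifs at h with h1 h2 h3 h4 h5 h6 h7 h8 <;>
      simp only [Option.some.injEq, reduceCtorEq] at h
    · -- both in p
      have := hp.1 h
      simp only [Fin.mk.injEq] at this
      exact Fin.ext this
    · exact absurd h.symm (hpq _ _)
    · exact Fin.ext (by omega)
    · exact absurd h (hpq _ _)
    · have := hq h
      simp only [Fin.mk.injEq] at this
      exact Fin.ext (by omega)
  · intro i hi
    by_cases h1 : i.val < m
    · obtain ⟨j, hjlt, hadj⟩ := hp.2 ⟨i.val, h1⟩ hi
      have hj2 : j.val < i.val := hjlt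
      have hi2 := i.isLt
      refine ⟨⟨j.val, by omega⟩, by simp [Fin.lt_def]; exact hjlt, ?_⟩
      have e1 : glue n m p q ⟨j.val, by omega⟩ = some (p j) := by
        simp [glue, j.isLt]
      have e2 : glue n m p q i = some (p ⟨i.val, h1⟩) := by
        simp [glue, h1]
      rw [e1, e2, cone_adj_some_some]
      exact hadj
    · by_cases h2 : i.val = m
      · have hm0 : m ≠ 0 := by omega
        refine ⟨⟨0, by omega⟩, by show (0:ℕ) < i.val; omega, ?_⟩
        have hm0' : 0 < m := Nat.pos_of_ne_zero hm0
        have e1 : glue n m p q ⟨0, by omega⟩ = some (p ⟨0, hm0'⟩) := by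
          simp [glue, hm0']
        have e2 : glue n m p q i = none := by
          simp [glue, h2]
        rw [e1, e2]
        exact (cone_adj_none_some G _).symm
      · refine ⟨⟨m, by have := i.isLt; omega⟩, by simp [Fin.lt_def]; omega, ?_⟩
        have e1 : glue n m p q ⟨m, by have := i.isLt; omega⟩ = none := by
          simp [glue]
        have e2 : glue n m p q i = some (q ⟨i.val - m - 1, by have := i.isLt; omega⟩) := by
          simp [glue, h1, h2]
        rw [e1, e2]
        exact cone_adj_none_some G _
end Cone

lemma glue_lt {V : Type*} {n m : ℕ} (p : Fin m → V) (q : Fin (n - m) → V)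
    {i : Fin (n+1)} (h : i.val < m) : glue n m p q i = some (p ⟨i.val, h⟩) := dif_pos h

lemma glue_eq {V : Type*} {n m : ℕ} (p : Fin m → V) (q : Fin (n - m) → V)
    {i : Fin (n+1)} (h : i.val = m) : glue n m p q i = none := by
  unfold glue
  rw [dif_neg (by omega), dif_pos h]

lemma glue_gt {V : Type*} {n m : ℕ} (p : Fin m → V) (q : Fin (n - m) → V)
    {i : Fin (n+1)} (h : m < i.val) :
    glue n m p q i = some (q ⟨i.val - m - 1, by have := i.isLt; omega⟩) := by
  unfold glue
  rw [dif_neg (by omega), dif_neg (by omega)]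

section ConeMain
variable {V : Type*} {G : SimpleGraph V}

set_option maxHeartbeats 2000000 in
theorem rwlCount_cone [Fintype V] :
    rwlCount G.cone = ∑ m ∈ Finset.range (Fintype.card V + 1),
      rwlPrefixCount G m * (Fintype.card V - m).factorial := by
  classical
  set n := Fintype.card V with hn
  have hco : Fintype.card (Option V) = n + 1 := by simp [hn]
  rw [rwlCount, hco, rwlPrefixCount]
  set F : (Σ m : Fin (n+1), Σ p : {p : Fin m.val → V // IsRWLPrefix G p},
      {q : Fin (n - m.val) → V // Function.Injective q ∧ ∀ j i, q j ≠ p.1 i}) →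
      {v : Fin (n+1) → Option V // IsRWLPrefix G.cone v} :=
    fun x => ⟨glue n x.1.val x.2.1.1 x.2.2.1,
      glue_isPrefix x.2.1.2 x.2.2.2.1 x.2.2.2.2⟩ with hFdef
  clear_value F
  have hbij : Function.Bijective F := by
    constructor
    · rintro ⟨m1, ⟨p1, hp1⟩, ⟨q1, hq1, hd1⟩⟩ ⟨m2, ⟨p2, hp2⟩, ⟨q2, hq2, hd2⟩⟩ h
      rw [hFdef] at h
      have h : glue n m1.val p1 q1 = glue n m2.val p2 q2 := congrArg Subtype.val h
      have hmm : m1 = m2 := by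
        by_contra hne
        have h0 := congrFun h m1
        rw [glue_eq p1 q1 rfl] at h0
        rcases Nat.lt_or_ge m1.val m2.val with hlt | hge
        · rw [glue_lt p2 q2 hlt] at h0
          simp at h0
        · have hgt : m2.val < m1.val := by
            rcases Nat.lt_or_ge m2.val m1.val with h' | h'
            · exact h'
            · exact absurd (Fin.ext (by omega)) hne
          rw [glue_gt p2 q2 hgt] at h0
          simp at h0
      subst hmm
      have hpp : p1 = p2 := by
        funext i
        have hi : i.val < m1.val := i.isLt
        have h0 := congrFun h ⟨i.val, by have := m1.isLt; omega⟩
        rw [glue_lt p1 q1 (show i.val < m1.val from hi),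
          glue_lt p2 q2 (show i.val < m1.val from hi)] at h0
        simp only [Option.some.injEq, Fin.val_mk, Fin.eta] at h0
        exact h0
      subst hpp
      have hqq : q1 = q2 := by
        funext j
        have hj : j.val < n - m1.val := j.isLt
        have hm1n : m1.val < n + 1 := m1.isLt
        have h0 := congrFun h ⟨m1.val + 1 + j.val, by omega⟩
        rw [glue_gt p1 q1 (show m1.val < m1.val + 1 + j.val from by omega),
          glue_gt p1 q2 (show m1.val < m1.val + 1 + j.val from by omega)] at h0
        simp only [Option.some.injEq, Fin.val_mk,
          show m1.val + 1 + j.val - m1.val - 1 = j.val from by omega, Fin.eta] at h0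
        exact h0
      subst hqq
      rfl
    · rintro ⟨v, hv⟩
      have hvbij : Function.Bijective v :=
        (Fintype.bijective_iff_injective_and_card v).mpr ⟨hv.1, by simp [hco]⟩
      obtain ⟨m, hm⟩ := hvbij.2 none
      have hmn : m.val < n + 1 := m.isLt
      have hvsome : ∀ i : Fin (n+1), i.val ≠ m.val → (v i).isSome := by
        intro i hne
        rw [Option.isSome_iff_ne_none]
        intro hcon
        exact hne (congrArg Fin.val (hv.1 (hcon.trans hm.symm)))
      set p : Fin m.val → V := fun i =>
        (v ⟨i.val, by have := i.isLt; omega⟩).get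
          (hvsome _ (show i.val ≠ m.val from by have := i.isLt; omega)) with hpdef
      set q : Fin (n - m.val) → V := fun j =>
        (v ⟨m.val + 1 + j.val, by have := j.isLt; omega⟩).get
          (hvsome _ (show m.val + 1 + j.val ≠ m.val from by omega)) with hqdef
      have hvp : ∀ i : Fin m.val, v ⟨i.val, by have := i.isLt; omega⟩ = some (p i) :=
        fun i => (Option.some_get _).symm
      have hvq : ∀ j : Fin (n - m.val),
          v ⟨m.val + 1 + j.val, by have := j.isLt; omega⟩ = some (q j) :=
        fun j => (Option.some_get _).symm
      have hp : IsRWLPrefix G p := by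
        constructor
        · intro i i' hii
          have : v ⟨i.val, by have := i.isLt; omega⟩ = v ⟨i'.val, by have := i'.isLt; omega⟩ := by
            rw [hvp i, hvp i', hii]
          have h2 := congrArg Fin.val (hv.1 this)
          rw [Fin.val_mk, Fin.val_mk] at h2
          exact Fin.ext h2
        · intro i hi
          have hilt : i.val < m.val := i.isLt
          obtain ⟨j, hjlt, hadj⟩ := hv.2 ⟨i.val, by omega⟩ (show i.val ≠ 0 from hi)
          have hjv : j.val < i.val := by
            have := hjlt
            rw [Fin.lt_def, Fin.val_mk] at this
            exact this
          have hjm : j.val < m.val := by omega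
          refine ⟨⟨j.val, hjm⟩, hjv, ?_⟩
          have e1 : v ⟨j.val, by omega⟩ = some (p ⟨j.val, hjm⟩) := hvp ⟨j.val, hjm⟩
          have e2 : v ⟨i.val, by omega⟩ = some (p i) := hvp i
          rw [← cone_adj_some_some (G := G), ← e1, ← e2]
          have : j = ⟨j.val, by omega⟩ := Fin.ext rfl
          rw [← this]
          exact hadj
      have hq : Function.Injective q := by
        intro j j' hjj
        have : v ⟨m.val + 1 + j.val, by have := j.isLt; omega⟩
            = v ⟨m.val + 1 + j'.val, by have := j'.isLt; omega⟩ := by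
          rw [hvq j, hvq j', hjj]
        have h2 := congrArg Fin.val (hv.1 this)
        simp only [Fin.val_mk] at h2
        exact Fin.ext (by omega)
      have hdisj : ∀ j i, q j ≠ p i := by
        intro j i hcon
        have : v ⟨m.val + 1 + j.val, by have := j.isLt; omega⟩
            = v ⟨i.val, by have := i.isLt; omega⟩ := by
          rw [hvq j, hvp i, hcon]
        have h2 := congrArg Fin.val (hv.1 this)
        simp only [Fin.val_mk] at h2
        have := i.isLt
        omega
      refine ⟨⟨m, ⟨p, hp⟩, ⟨q, hq, hdisj⟩⟩, ?_⟩
      rw [hFdef]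
      apply Subtype.ext
      show glue n m.val p q = v
      funext i
      rcases Nat.lt_trichotomy i.val m.val with h1 | h1 | h1
      · rw [glue_lt p q h1]
        exact (hvp ⟨i.val, h1⟩).symm
      · rw [glue_eq p q h1]
        have : i = m := Fin.ext h1
        rw [this, hm]
      · rw [glue_gt p q h1]
        have hidx : i.val - m.val - 1 < n - m.val := by have := i.isLt; omega
        have h5 := hvq ⟨i.val - m.val - 1, hidx⟩
        have hieq : (⟨m.val + 1 + ((⟨i.val - m.val - 1, hidx⟩ : Fin (n - m.val)) : ℕ),
            by have := i.isLt; simp only [Fin.val_mk]; omega⟩ : Fin (n+1)) = i :=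
          Fin.ext (by simp only [Fin.val_mk]; omega)
        rw [hieq] at h5
        exact h5.symm
  rw [← Nat.card_congr (Equiv.ofBijective F hbij), Nat.card_eq_fintype_card,
    Fintype.card_sigma]
  have hinner : ∀ m : Fin (n+1),
      Fintype.card (Σ p : {p : Fin m.val → V // IsRWLPrefix G p},
        {q : Fin (n - m.val) → V // Function.Injective q ∧ ∀ j i, q j ≠ p.1 i})
      = rwlPrefixCount G m.val * (n - m.val).factorial := by
    intro m
    rw [Fintype.card_sigma]
    have hqcard : ∀ p : {p : Fin m.val → V // IsRWLPrefix G p},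
        Fintype.card {q : Fin (n - m.val) → V // Function.Injective q ∧ ∀ j i, q j ≠ p.1 i}
        = (n - m.val).factorial := by
      intro p
      have e : {q : Fin (n - m.val) → V // Function.Injective q ∧ ∀ j i, q j ≠ p.1 i} ≃
          (Fin (n - m.val) ↪ {x : V // x ∉ Set.range p.1}) :=
        { toFun := fun q => ⟨fun j => ⟨q.1 j, by rintro ⟨i, hi⟩; exact q.2.2 j i hi.symm⟩,
            fun j j' hjj => q.2.1 (congrArg Subtype.val hjj)⟩
          invFun := fun f => ⟨fun j => (f j).1, fun j j' h => f.injective (Subtype.ext h),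
            fun j i hcon => (f j).2 ⟨i, hcon.symm⟩⟩
          left_inv := fun q => rfl
          right_inv := fun f => rfl }
      rw [Fintype.card_congr e, Fintype.card_embedding_eq]
      have hcompl : Fintype.card {x : V // x ∉ Set.range p.1} = n - m.val := by
        rw [Fintype.card_subtype_compl]
        have : Fintype.card {x : V // x ∈ Set.range p.1} = m.val := by
          have h1 := Set.card_range_of_injective p.2.1
          rw [Fintype.card_fin] at h1
          convert h1 using 2
        rw [this]
      rw [hcompl, Fintype.card_fin, Nat.descFactorial_self]
    rw [Finset.sum_congr rfl (fun p _ => hqcard p), Finset.sum_const, smul_eq_mul,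
      rwlPrefixCount, Nat.card_eq_fintype_card, Finset.card_univ]
  rw [Finset.sum_congr rfl (fun m _ => hinner m)]
  exact Fin.sum_univ_eq_sum_range (fun m => rwlPrefixCount G m * (n - m).factorial) (n+1)

end ConeMain

def Tc (d : ℕ → Bool) : ℕ → ℕ
  | 0 => 0
  | i+1 => Tc d i + (if d i then 1 else 0)

def ofs (d : ℕ → Bool) : ℕ → ℤ
  | 0 => 0
  | i+1 => if d i then (Tc d i : ℤ) + 1 else (Tc d i : ℤ) - i - 1

lemma Tc_le (d : ℕ → Bool) (i : ℕ) : Tc d i ≤ i := by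
  induction i with
  | zero => simp [Tc]
  | succ i ih => simp only [Tc]; split <;> omega

lemma Tc_congr {d₁ d₂ : ℕ → Bool} (i : ℕ) (h : ∀ l < i, d₁ l = d₂ l) : Tc d₁ i = Tc d₂ i := by
  induction i with
  | zero => rfl
  | succ i ih =>
    simp only [Tc, ih (fun l hl => h l (by omega)), h i (by omega)]

lemma ofs_congr {d₁ d₂ : ℕ → Bool} (i : ℕ) (h : ∀ l < i, d₁ l = d₂ l) : ofs d₁ i = ofs d₂ i := by
  cases i with
  | zero => rfl
  | succ i =>
    simp only [ofs, Tc_congr i (fun l hl => h l (by omega)), h i (by omega)]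

lemma ofs_image (d : ℕ → Bool) (i : ℕ) :
    Finset.image (ofs d) (Finset.range (i+1)) = Finset.Icc ((Tc d i : ℤ) - i) (Tc d i) := by
  induction i with
  | zero => simp [ofs, Tc]
  | succ i ih =>
    rw [Finset.range_add_one, Finset.image_insert, ih]
    by_cases h : d i <;> ext x <;>
      simp only [ofs, Tc, h, if_true, if_false, Finset.mem_insert, Finset.mem_Icc] <;>
      push_cast <;> omega

lemma ofs_injOn (d : ℕ → Bool) (i : ℕ) : Set.InjOn (ofs d) (Finset.range (i+1)) := by
  apply Finset.injOn_of_card_image_eq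
  rw [ofs_image, Finset.card_range, Int.card_Icc]
  have := Tc_le d i
  omega

variable (n' : ℕ)
local notation "N" => n' + 3
open Fin.CommRing

def cyc (c : Fin (N)) (d : ℕ → Bool) (i : ℕ) : Fin (N) := c + ((ofs d i : ℤ) : Fin (N))

lemma fin_intCast_eq_iff (z w : ℤ) : ((z : Fin (N)) = (w : Fin (N))) ↔ ((N : ℤ)) ∣ w - z := by
  constructor
  · intro h
    have h2 : (z : ZMod (N)) = (w : ZMod (N)) := h
    rw [ZMod.intCast_eq_intCast_iff] at h2
    have := h2.dvd
    push_cast at this ⊢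
    convert this using 2
  · intro h
    have h2 : (z : ZMod (N)) = (w : ZMod (N)) := by
      rw [ZMod.intCast_eq_intCast_iff, Int.modEq_iff_dvd]
      push_cast at h ⊢
      convert h using 2
    exact h2

lemma cyc_adj_succ (x : Fin (N)) : (SimpleGraph.cycleGraph (N)).Adj x (x+1) := by
  rw [SimpleGraph.cycleGraph_adj (n := n'+1)]
  right; ring

lemma cyc_zero (c : Fin (N)) (d : ℕ → Bool) : cyc n' c d 0 = c := by
  simp [cyc, ofs]

lemma ofs_succ_true (d : ℕ → Bool) (k : ℕ) (hd : d k = true) :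
    ofs d (k+1) = (Tc d k : ℤ) + 1 := by simp [ofs, hd]

lemma ofs_succ_false (d : ℕ → Bool) (k : ℕ) (hd : d k = false) :
    ofs d (k+1) = (Tc d k : ℤ) - k - 1 := by simp [ofs, hd]

lemma cyc_isPrefix (c : Fin (N)) (d : ℕ → Bool) (m : ℕ) (hm : m ≤ N) :
    IsRWLPrefix (SimpleGraph.cycleGraph (N)) (fun i : Fin m => cyc n' c d i.val) := by
  constructor
  · intro i j h
    have hm1 : 1 ≤ m := by have := i.isLt; omega
    have hmem : ∀ l : Fin m, ofs d l.val ∈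
        Finset.Icc ((Tc d (m-1) : ℤ) - ((m-1 : ℕ) : ℤ)) (Tc d (m-1)) := by
      intro l
      rw [← ofs_image]
      exact Finset.mem_image_of_mem _ (Finset.mem_range.mpr (by have := l.isLt; omega))
    have h2 : ((ofs d i.val : ℤ) : Fin (N)) = ((ofs d j.val : ℤ) : Fin (N)) :=
      add_left_cancel h
    rw [fin_intCast_eq_iff] at h2
    have hi := Finset.mem_Icc.mp (hmem i)
    have hj := Finset.mem_Icc.mp (hmem j)
    have heq : ofs d i.val = ofs d j.val := by
      by_contra hne
      have hne' : ofs d j.val - ofs d i.val ≠ 0 := by omega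
      have habs : ((N : ℕ) : ℤ) ∣ |ofs d j.val - ofs d i.val| :=
        (dvd_abs _ _).mpr (by exact_mod_cast h2)
      have hb := Int.le_of_dvd (abs_pos.mpr hne') habs
      have h3 : |ofs d j.val - ofs d i.val| ≤ (m : ℤ) - 1 := abs_le.mpr (by omega)
      have h4 : (m : ℤ) ≤ ((N : ℕ) : ℤ) := by exact_mod_cast hm
      linarith
    have := ofs_injOn d (m-1)
      (Finset.mem_coe.mpr (Finset.mem_range.mpr (by have := i.isLt; omega)))
      (Finset.mem_coe.mpr (Finset.mem_range.mpr (by have := j.isLt; omega))) heq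
    exact Fin.ext this
  · intro i hi
    obtain ⟨k, hk⟩ := Nat.exists_eq_succ_of_ne_zero hi
    have hkm : k + 1 < m := by have := i.isLt; omega
    by_cases hd : d k
    · have hmem : (Tc d k : ℤ) ∈ Finset.Icc ((Tc d k : ℤ) - k) (Tc d k) :=
        Finset.mem_Icc.mpr ⟨by omega, by omega⟩
      rw [show ((Tc d k : ℤ) - (k : ℤ)) = ((Tc d k : ℤ) - ((k : ℕ) : ℤ)) from rfl,
        ← ofs_image] at hmem
      obtain ⟨j, hjr, hj⟩ := Finset.mem_image.mp hmem
      rw [Finset.mem_range] at hjr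
      refine ⟨⟨j, by omega⟩, ?_, ?_⟩
      · rw [Fin.lt_def]; simp; omega
      · have hc : cyc n' c d (k+1) = cyc n' c d j + 1 := by
          simp only [cyc, hj, ofs_succ_true d k hd]
          push_cast; ring
        have hAdj : (SimpleGraph.cycleGraph (N)).Adj (cyc n' c d j) (cyc n' c d (k+1)) := by
          rw [hc]; exact cyc_adj_succ n' _
        simpa only [hk, Nat.succ_eq_add_one] using hAdj
    · have hmem : (Tc d k : ℤ) - k ∈ Finset.Icc ((Tc d k : ℤ) - k) (Tc d k) :=
        Finset.mem_Icc.mpr ⟨by omega, by omega⟩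
      rw [show ((Tc d k : ℤ) - (k : ℤ)) = ((Tc d k : ℤ) - ((k : ℕ) : ℤ)) from rfl,
        ← ofs_image] at hmem
      obtain ⟨j, hjr, hj⟩ := Finset.mem_image.mp hmem
      rw [Finset.mem_range] at hjr
      refine ⟨⟨j, by omega⟩, ?_, ?_⟩
      · rw [Fin.lt_def]; simp; omega
      · have hc : cyc n' c d j = cyc n' c d (k+1) + 1 := by
          simp only [cyc, hj, ofs_succ_false d k (by simpa using hd)]
          push_cast; ring
        have h3 := cyc_adj_succ n' (cyc n' c d (k+1))
        rw [← hc] at h3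
        have h4 := h3.symm
        simpa only [hk, Nat.succ_eq_add_one] using h4

lemma cyc_decode (m : ℕ) (hm1 : 1 ≤ m) (hm : m ≤ N) (p : Fin m → Fin (N))
    (hp : IsRWLPrefix (SimpleGraph.cycleGraph (N)) p) :
    ∃ d : ℕ → Bool, ∀ i : Fin m, p i = cyc n' (p ⟨0, hm1⟩) d i.val := by
  set c := p ⟨0, hm1⟩ with hc
  have key : ∀ i, i < m → ∃ d : ℕ → Bool, ∀ j (hj : j < m), j ≤ i → p ⟨j, hj⟩ = cyc n' c d j := by
    intro i
    induction i with
    | zero =>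
      intro _
      refine ⟨fun _ => false, fun j hj hj0 => ?_⟩
      have : j = 0 := by omega
      subst this
      rw [cyc_zero]
    | succ i ih =>
      intro hi
      obtain ⟨d, hd⟩ := ih (by omega)
      obtain ⟨j', hj'lt, hadj⟩ := hp.2 ⟨i+1, hi⟩ (by simp)
      have hj'v : j'.val < i + 1 := hj'lt
      have hpj' : p j' = cyc n' c d j'.val := by
        have := hd j'.val j'.isLt (by omega)
        simpa using this
      have hk_mem : ofs d j'.val ∈ Finset.Icc ((Tc d i : ℤ) - (i : ℕ)) (Tc d i) := by
        rw [← ofs_image]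
        exact Finset.mem_image_of_mem _ (Finset.mem_range.mpr hj'v)
      rw [Finset.mem_Icc] at hk_mem
      have hnotmem : ∀ z : ℤ, ((Tc d i : ℤ) - (i : ℕ)) ≤ z → z ≤ (Tc d i : ℤ) →
          p ⟨i+1, hi⟩ ≠ c + (z : Fin (N)) := by
        intro z hz1 hz2 hcontra
        have hz : z ∈ Finset.image (ofs d) (Finset.range (i+1)) := by
          rw [ofs_image]; exact Finset.mem_Icc.mpr ⟨hz1, hz2⟩
        obtain ⟨j'', hj''r, hj''⟩ := Finset.mem_image.mp hz
        rw [Finset.mem_range] at hj''r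
        have h1 : p ⟨j'', by omega⟩ = cyc n' c d j'' := hd j'' (by omega) (by omega)
        have h2 : p ⟨i+1, hi⟩ = p ⟨j'', by omega⟩ := by
          rw [hcontra, h1, cyc, hj'']
        have := hp.1 h2
        simp only [Fin.mk.injEq] at this
        omega
      rw [SimpleGraph.cycleGraph_adj (n := n'+1)] at hadj
      rcases hadj with hadj | hadj
      · -- p j' - p (i+1) = 1, so p(i+1) = p j' - 1, bottom extension
        have hpi : p ⟨i+1, hi⟩ = c + ((ofs d j'.val - 1 : ℤ) : Fin (N)) := by
          have : p ⟨i+1, hi⟩ = p j' - 1 := by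
            linear_combination -hadj
          rw [this, hpj', cyc]
          push_cast
          ring
        have hkB : ofs d j'.val = (Tc d i : ℤ) - (i : ℕ) := by
          by_contra hne
          exact hnotmem (ofs d j'.val - 1) (by omega) (by omega) hpi
        refine ⟨Function.update d i false, fun j hj hj0 => ?_⟩
        rcases Nat.lt_or_ge j (i+1) with hji | hji
        · have hcong : ofs (Function.update d i false) j = ofs d j :=
            ofs_congr j (fun l hl => Function.update_of_ne (by omega) _ _)
          rw [cyc, hcong, ← cyc]
          exact hd j hj (by omega)
        · have hj1 : j = i + 1 := by omega
          subst hj1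
          have hofs : ofs (Function.update d i false) (i+1) = (Tc d i : ℤ) - i - 1 := by
            rw [ofs_succ_false _ _ (Function.update_self _ _ _),
              Tc_congr i (fun l hl => Function.update_of_ne (by omega) _ _)]
          rw [cyc, hofs, hpi, hkB]
      · -- p (i+1) - p j' = 1, top extension
        have hpi : p ⟨i+1, hi⟩ = c + ((ofs d j'.val + 1 : ℤ) : Fin (N)) := by
          have : p ⟨i+1, hi⟩ = p j' + 1 := by
            linear_combination hadj
          rw [this, hpj', cyc]
          push_cast
          ring
        have hkT : ofs d j'.val = (Tc d i : ℤ) := by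
          by_contra hne
          exact hnotmem (ofs d j'.val + 1) (by omega) (by omega) hpi
        refine ⟨Function.update d i true, fun j hj hj0 => ?_⟩
        rcases Nat.lt_or_ge j (i+1) with hji | hji
        · have hcong : ofs (Function.update d i true) j = ofs d j :=
            ofs_congr j (fun l hl => Function.update_of_ne (by omega) _ _)
          rw [cyc, hcong, ← cyc]
          exact hd j hj (by omega)
        · have hj1 : j = i + 1 := by omega
          subst hj1
          have hofs : ofs (Function.update d i true) (i+1) = (Tc d i : ℤ) + 1 := by
            rw [ofs_succ_true _ _ (Function.update_self _ _ _),
              Tc_congr i (fun l hl => Function.update_of_ne (by omega) _ _)]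
          rw [cyc, hofs, hpi, hkT]
  obtain ⟨d, hd⟩ := key (m-1) (by omega)
  refine ⟨d, fun i => ?_⟩
  have := hd i.val i.isLt (by have := i.isLt; omega)
  simpa using this

def extd (m : ℕ) (b : Bool) (d' : Fin m → Bool) : ℕ → Bool :=
  fun i => if h : i < m then d' ⟨i, h⟩ else b

lemma dirs_eq (c : Fin (N)) (d₁ d₂ : ℕ → Bool) (i : ℕ) (hiN : i + 2 < N)
    (hagree : ∀ l < i, d₁ l = d₂ l) (h : cyc n' c d₁ (i+1) = cyc n' c d₂ (i+1)) :
    d₁ i = d₂ i := by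
  have h2 : ((ofs d₁ (i+1) : ℤ) : Fin (N)) = ((ofs d₂ (i+1) : ℤ) : Fin (N)) :=
    add_left_cancel h
  rw [fin_intCast_eq_iff] at h2
  have hT : Tc d₁ i = Tc d₂ i := Tc_congr i hagree
  by_contra hne
  have hdvd : ((N : ℕ) : ℤ) ∣ ((i : ℤ) + 2) := by
    cases hb₁ : d₁ i <;> cases hb₂ : d₂ i
    · simp [hb₁, hb₂] at hne
    · rw [ofs_succ_false _ _ hb₁, ofs_succ_true _ _ hb₂, hT] at h2
      have : ((i : ℤ) + 2) = (↑(Tc d₂ i) + 1) - (↑(Tc d₂ i) - ↑i - 1) := by ring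
      rw [this]
      exact_mod_cast h2
    · rw [ofs_succ_true _ _ hb₁, ofs_succ_false _ _ hb₂, hT] at h2
      have : ((N : ℕ) : ℤ) ∣ (↑(Tc d₂ i) - ↑i - 1) - (↑(Tc d₂ i) + 1) := by exact_mod_cast h2
      have h3 := this.neg_right
      have : ((i : ℤ) + 2) = -((↑(Tc d₂ i) - ↑i - 1) - (↑(Tc d₂ i) + 1)) := by ring
      rw [this]
      exact h3
    · simp [hb₁, hb₂] at hne
  have := Int.le_of_dvd (by omega) hdvd
  push_cast at this
  omega

theorem rwlPrefixCount_cycle_mid (m : ℕ) (hm1 : 1 ≤ m) (hm : m ≤ N - 1) :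
    rwlPrefixCount (SimpleGraph.cycleGraph (N)) m = (N) * 2 ^ (m - 1) := by
  classical
  set F : Fin (N) × (Fin (m-1) → Bool) → {p : Fin m → Fin (N) // IsRWLPrefix (SimpleGraph.cycleGraph (N)) p} :=
    fun x => ⟨fun i => cyc n' x.1 (extd (m-1) false x.2) i.val,
      cyc_isPrefix n' _ _ m (by omega)⟩ with hF
  have hbij : Function.Bijective F := by
    constructor
    · rintro ⟨c₁, d₁⟩ ⟨c₂, d₂⟩ h
      have h' : ∀ i : Fin m, cyc n' c₁ (extd (m-1) false d₁) i.val
          = cyc n' c₂ (extd (m-1) false d₂) i.val := fun i => congrFun (congrArg Subtype.val h) i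
      have hcc : c₁ = c₂ := by
        have := h' ⟨0, by omega⟩
        simpa [cyc_zero] using this
      subst hcc
      have hdd : ∀ i, ∀ hi : i < m - 1, d₁ ⟨i, hi⟩ = d₂ ⟨i, hi⟩ := by
        intro i
        induction i using Nat.strong_induction_on with
        | _ i IH =>
          intro hi
          have hagree : ∀ l < i, extd (m-1) false d₁ l = extd (m-1) false d₂ l := by
            intro l hl
            have hlm : l < m - 1 := by omega
            simp only [extd, dif_pos hlm]
            exact IH l hl hlm
          have heval := h' ⟨i+1, by omega⟩
          have := dirs_eq n' _ _ _ i (by omega) hagree heval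
          simpa only [extd, dif_pos hi] using this
      refine Prod.ext rfl ?_
      simp only
      funext i
      have := hdd i.val i.isLt
      simpa using this
    · rintro ⟨p, hp⟩
      obtain ⟨d, hd⟩ := cyc_decode n' m hm1 (by omega) p hp
      refine ⟨⟨p ⟨0, hm1⟩, fun i => d i.val⟩, ?_⟩
      apply Subtype.ext
      funext i
      have hcong : ofs (extd (m-1) false (fun i : Fin (m-1) => d i.val)) i.val = ofs d i.val := by
        apply ofs_congr
        intro l hl
        have hlm : l < m - 1 := by have := i.isLt; omega
        simp only [extd, dif_pos hlm]
      simp only [hF]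
      rw [cyc, hcong, ← cyc, ← hd i]
  have hcard := Nat.card_congr (Equiv.ofBijective F hbij)
  rw [rwlPrefixCount, ← hcard]
  simp [Nat.card_eq_fintype_card]

theorem rwlPrefixCount_cycle_full :
    rwlPrefixCount (SimpleGraph.cycleGraph (N)) (N) = (N) * 2 ^ (N - 2) := by
  classical
  set F : Fin (N) × (Fin (n'+1) → Bool) → {p : Fin (N) → Fin (N) // IsRWLPrefix (SimpleGraph.cycleGraph (N)) p} :=
    fun x => ⟨fun i => cyc n' x.1 (extd (n'+1) true x.2) i.val,
      cyc_isPrefix n' _ _ (N) le_rfl⟩ with hF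
  have hbij : Function.Bijective F := by
    constructor
    · rintro ⟨c₁, d₁⟩ ⟨c₂, d₂⟩ h
      have h' : ∀ i : Fin (N), cyc n' c₁ (extd (n'+1) true d₁) i.val
          = cyc n' c₂ (extd (n'+1) true d₂) i.val := fun i => congrFun (congrArg Subtype.val h) i
      have hcc : c₁ = c₂ := by
        have := h' ⟨0, by omega⟩
        simpa [cyc_zero] using this
      subst hcc
      have hdd : ∀ i, ∀ hi : i < n' + 1, d₁ ⟨i, hi⟩ = d₂ ⟨i, hi⟩ := by
        intro i
        induction i using Nat.strong_induction_on with
        | _ i IH =>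
          intro hi
          have hagree : ∀ l < i, extd (n'+1) true d₁ l = extd (n'+1) true d₂ l := by
            intro l hl
            have hlm : l < n' + 1 := by omega
            simp only [extd, dif_pos hlm]
            exact IH l hl hlm
          have heval := h' ⟨i+1, by omega⟩
          have := dirs_eq n' _ _ _ i (by omega) hagree heval
          simpa only [extd, dif_pos hi] using this
      refine Prod.ext rfl ?_
      simp only
      funext i
      have := hdd i.val i.isLt
      simpa using this
    · rintro ⟨p, hp⟩
      obtain ⟨d, hd⟩ := cyc_decode n' (N) (by omega) le_rfl p hp
      refine ⟨⟨p ⟨0, by omega⟩, fun i => d i.val⟩, ?_⟩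
      apply Subtype.ext
      funext i
      simp only [hF]
      rw [hd i]
      set dfull := extd (n'+1) true (fun i : Fin (n'+1) => d i.val) with hdfull
      rcases Nat.lt_or_ge i.val (n'+2) with hiv | hiv
      · have hcong : ofs dfull i.val = ofs d i.val := by
          apply ofs_congr
          intro l hl
          have hlm : l < n' + 1 := by omega
          simp only [hdfull, extd, dif_pos hlm]
        rw [cyc, hcong, ← cyc]
      · have hiv2 : i.val = n' + 2 := by have := i.isLt; omega
        have hTeq : Tc dfull (n'+1) = Tc d (n'+1) := by
          apply Tc_congr
          intro l hl
          simp only [hdfull, extd, dif_pos hl]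
        have hofs1 : ofs dfull (n'+2) = (Tc d (n'+1) : ℤ) + 1 := by
          rw [ofs_succ_true _ _ (by simp [hdfull, extd]), hTeq]
        rw [hiv2, cyc, cyc, hofs1]
        congr 1
        rcases Bool.eq_false_or_eq_true (d (n'+1)) with hb | hb
        · rw [ofs_succ_true _ _ hb]
        · rw [ofs_succ_false _ _ hb, fin_intCast_eq_iff]
          refine ⟨-1, by push_cast; ring⟩
  have hcard := Nat.card_congr (Equiv.ofBijective F hbij)
  rw [rwlPrefixCount, ← hcard]
  simp [Nat.card_eq_fintype_card]


theorem rwlCount_wheelGraph (n : ℕ) (hn : 3 ≤ n) :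
    (rwlCount (wheelGraph n) : ℚ) =
      n * ((n - 1).factorial - 2 ^ (n - 2) +
        2 ^ (n - 1) * ∑ k ∈ Finset.range n, (k.factorial : ℚ) / 2 ^ k) := by
  obtain ⟨n', rfl⟩ : ∃ n', n = n' + 3 := ⟨n - 3, by omega⟩
  clear hn
  -- Step 1: the cone decomposition
  have hA := rwlCount_cone (G := SimpleGraph.cycleGraph (n'+3))
  rw [Fintype.card_fin] at hA
  have hw : rwlCount (wheelGraph (n'+3)) = rwlCount (SimpleGraph.cycleGraph (n'+3)).cone := rfl
  rw [hw, hA, Finset.sum_range_succ, rwlPrefixCount_cycle_full n']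
  have hr : Finset.range (n'+3) = Finset.range (n'+2+1) := rfl
  rw [hr, Finset.sum_range_succ', rwlPrefixCount_zero]
  have hmid : ∀ k ∈ Finset.range (n'+2),
      rwlPrefixCount (SimpleGraph.cycleGraph (n'+3)) (k+1) * (n'+3-(k+1)).factorial
      = (n'+3) * 2^k * (n'+2-k).factorial := by
    intro k hk
    rw [Finset.mem_range] at hk
    rw [rwlPrefixCount_cycle_mid n' (k+1) (by omega) (by omega)]
    have h1 : n'+3-(k+1) = n'+2-k := by omega
    rw [h1, show k+1-1 = k from rfl]
  rw [Finset.sum_congr rfl hmid]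
  -- Step 2: clean up truncated subtractions
  rw [show n'+3-2 = n'+1 from rfl, show n'+3-1 = n'+2 from rfl, show n'+3-0 = n'+3 from rfl,
    Nat.sub_self, Nat.factorial_zero]
  -- Step 3: move to ℚ
  push_cast
  -- Step 4: rewrite the ℚ-side sum
  have e3 : (2:ℚ)^(n'+2) * ∑ k ∈ Finset.range (n'+3), (k.factorial : ℚ) / 2^k
      = ∑ k ∈ Finset.range (n'+3), (2:ℚ)^(n'+2-k) * (k.factorial : ℚ) := by
    rw [Finset.mul_sum]
    refine Finset.sum_congr rfl fun k hk => ?_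
    rw [Finset.mem_range] at hk
    have hsplit : (2:ℚ)^(n'+2) = 2^(n'+2-k) * 2^k := by
      rw [← pow_add]
      congr 1
      omega
    rw [hsplit]
    have h2k : (2:ℚ)^k ≠ 0 := by positivity
    field_simp
  have e4 : ∑ k ∈ Finset.range (n'+3), (2:ℚ)^(n'+2-k) * (k.factorial : ℚ)
      = ∑ k ∈ Finset.range (n'+2), (2:ℚ)^(n'+1-k) * (((k+1).factorial : ℕ) : ℚ) + 2^(n'+2) := by
    rw [hr, Finset.sum_range_succ']
    congr 1
    · refine Finset.sum_congr rfl fun k hk => ?_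
      rw [Finset.mem_range] at hk
      rw [show n'+2-(k+1) = n'+1-k from by omega]
    · norm_num
  have e2 : ∑ k ∈ Finset.range (n'+2), (2:ℚ)^k * (((n'+2-k).factorial : ℕ) : ℚ)
      = ∑ k ∈ Finset.range (n'+2), (2:ℚ)^(n'+1-k) * (((k+1).factorial : ℕ) : ℚ) := by
    conv_lhs => rw [← Finset.sum_range_reflect]
    refine Finset.sum_congr rfl fun j hj => ?_
    rw [Finset.mem_range] at hj
    rw [show n'+2-1-j = n'+1-j from by omega, show n'+2-(n'+1-j) = j+1 from by omega]
  have hf : (((n'+3).factorial : ℕ) : ℚ) = ((n' : ℚ)+3) * (((n'+2).factorial : ℕ) : ℚ) := by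
    rw [show n'+3 = (n'+2)+1 from rfl, Nat.factorial_succ]
    push_cast
    ring
  have hp2 : (2:ℚ)^(n'+2) = 2 * 2^(n'+1) := by
    rw [show n'+2 = (n'+1)+1 from rfl, pow_succ]
    ring
  have e1 : ∑ k ∈ Finset.range (n'+2), (((n':ℚ)+3) * 2^k * (((n'+2-k).factorial : ℕ) : ℚ))
      = ((n':ℚ)+3) * ∑ k ∈ Finset.range (n'+2), ((2:ℚ)^k * (((n'+2-k).factorial : ℕ) : ℚ)) := by
    rw [Finset.mul_sum]
    refine Finset.sum_congr rfl fun k hk => ?_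
    ring
  rw [e3, e4, e1, e2, hf, hp2]
  ring
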